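/- The set of pairs (A, B) ∈ ℝ^{n×n} × ℝ^{n×m} for which the controllability matrix (B, AB, ..., A^{n-1}B) has full row rank n is an open and dense subset of ℝ^{n×n} × ℝ^{n×m} (with m ≥ 1). -/

import Mathlib

def ctrlMat {n m : ℕ} (A : Matrix (Fin n) (Fin n) ℝ) (B : Matrix (Fin n) (Fin m) ℝ) :
    Matrix (Fin n) (Fin n × Fin m) ℝ :=
  fun i p => (A ^ (p.1 : ℕ) * B) i p.2

open Matrix Polynomial Module

/-- Generalized controllability matrix over any commutative ring. -/
def ctrlMatG {R : Type*} [CommRing R] {n m : ℕ} (A : Matrix (Fin n) (Fin n) R)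
    (B : Matrix (Fin n) (Fin m) R) : Matrix (Fin n) (Fin n × Fin m) R :=
  fun i p => (A ^ (p.1 : ℕ) * B) i p.2

lemma ctrlMatG_real {n m : ℕ} (A : Matrix (Fin n) (Fin n) ℝ) (B : Matrix (Fin n) (Fin m) ℝ) :
    ctrlMatG A B = ctrlMat A B := rfl

lemma ctrlMatG_map {R S : Type*} [CommRing R] [CommRing S] (f : R →+* S) {n m : ℕ}
    (A : Matrix (Fin n) (Fin n) R) (B : Matrix (Fin n) (Fin m) R) :
    (ctrlMatG A B).map f = ctrlMatG (A.map f) (B.map f) := by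
  ext i p
  have h : (A ^ (p.1 : ℕ)).map f = (A.map f) ^ (p.1 : ℕ) := by
    rw [← RingHom.mapMatrix_apply, ← RingHom.mapMatrix_apply, map_pow]
  simp only [ctrlMatG, Matrix.map_apply]
  rw [show ((A.map f) ^ (p.1 : ℕ) * B.map f) = ((A ^ (p.1 : ℕ)) * B).map f by
    rw [Matrix.map_mul, h]]
  rfl

/-- A square real matrix has full rank iff its determinant is nonzero. -/
lemma rank_sq_eq_iff_det_ne_zero {n : ℕ} (N : Matrix (Fin n) (Fin n) ℝ) :
    N.rank = n ↔ N.det ≠ 0 := by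
  constructor
  · intro h hdet
    obtain ⟨v, hv, hmv⟩ := Matrix.exists_mulVec_eq_zero_iff.2 hdet
    have hker : v ∈ LinearMap.ker N.mulVecLin := by
      simpa [Matrix.mulVecLin_apply] using hmv
    have h1 : finrank ℝ (LinearMap.range N.mulVecLin) +
        finrank ℝ (LinearMap.ker N.mulVecLin) = n := by
      simpa [Module.finrank_fintype_fun_eq_card] using
        N.mulVecLin.finrank_range_add_finrank_ker
    rw [Matrix.rank] at h
    have h2 : finrank ℝ (LinearMap.ker N.mulVecLin) = 0 := by omega
    rw [Submodule.finrank_eq_zero.mp h2] at hker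
    exact hv (by simpa using hker)
  · intro hdet
    simpa using N.rank_of_isUnit ((Matrix.isUnit_iff_isUnit_det N).2
      (isUnit_iff_ne_zero.2 hdet))

lemma mem_iff_det {n m : ℕ} (A : Matrix (Fin n) (Fin n) ℝ) (B : Matrix (Fin n) (Fin m) ℝ) :
    (ctrlMat A B).rank = n ↔ (ctrlMat A B * (ctrlMat A B)ᵀ).det ≠ 0 := by
  rw [← rank_sq_eq_iff_det_ne_zero, Matrix.rank_self_mul_transpose]

/-- The shift (nilpotent Jordan block) matrix. -/
def shiftM (n : ℕ) : Matrix (Fin n) (Fin n) ℝ :=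
  fun i j => if (i : ℕ) = (j : ℕ) + 1 then 1 else 0

lemma shiftM_pow (n : ℕ) (k : ℕ) (i l : Fin n) :
    ((shiftM n) ^ k) i l = if (i : ℕ) = (l : ℕ) + k then 1 else 0 := by
  induction k generalizing l with
  | zero => simp [Matrix.one_apply, Fin.ext_iff]
  | succ k ih =>
    rw [pow_succ, Matrix.mul_apply]
    by_cases h : (l : ℕ) + 1 < n
    · rw [Finset.sum_eq_single (⟨(l : ℕ) + 1, h⟩ : Fin n)]
      · rw [ih]
        simp only [shiftM]
        rw [if_pos trivial, mul_one]
        exact if_congr (by omega) rfl rfl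
      · intro b _ hb
        have : (b : ℕ) ≠ (l : ℕ) + 1 := fun hb' => hb (Fin.ext hb')
        simp [shiftM, this]
      · simp
    · rw [Finset.sum_eq_zero, eq_comm, if_neg (by omega)]
      intro b _
      have : (b : ℕ) ≠ (l : ℕ) + 1 := by omega
      simp [shiftM, this]

/-- A good (controllable) pair exists. -/
lemma exists_good_pair (n m : ℕ) (hm : 1 ≤ m) :
    ∃ (A : Matrix (Fin n) (Fin n) ℝ) (B : Matrix (Fin n) (Fin m) ℝ),
      (ctrlMat A B).rank = n := by
  set B0 : Matrix (Fin n) (Fin m) ℝ := fun i _ => if (i : ℕ) = 0 then 1 else 0 with hB0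
  refine ⟨shiftM n, B0, ?_⟩
  have hcol : ∀ (k : Fin n) (j : Fin m),
      (ctrlMat (shiftM n) B0)ᵀ (k, j) = Pi.single k 1 := by
    intro k j
    funext i
    simp only [ctrlMat, Matrix.transpose_apply, Matrix.mul_apply]
    simp only [hB0]
    rw [Finset.sum_eq_single (⟨0, i.pos⟩ : Fin n)]
    · rw [shiftM_pow]
      simp only [Pi.single_apply]
      rw [if_pos trivial, mul_one]
      exact if_congr (by rw [Fin.ext_iff]; omega) rfl rfl
    · intro b _ hb
      have : (b : ℕ) ≠ 0 := fun hb' => hb (Fin.ext hb')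
      simp [this]
    · simp
  have hsp : Submodule.span ℝ (Set.range (ctrlMat (shiftM n) B0)ᵀ) = ⊤ := by
    rw [eq_top_iff, ← (Pi.basisFun ℝ (Fin n)).span_eq]
    refine Submodule.span_le.2 ?_
    rintro x ⟨k, rfl⟩
    apply Submodule.subset_span
    exact ⟨(k, ⟨0, hm⟩), by rw [hcol]; simp⟩
  rw [Matrix.rank_eq_finrank_span_cols]
  change finrank ℝ (Submodule.span ℝ (Set.range (ctrlMat (shiftM n) B0)ᵀ)) = n
  rw [hsp, finrank_top,
    Module.finrank_fintype_fun_eq_card, Fintype.card_fin]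

/-- The set of reachable pairs `(A, B)` is open and dense in the parameter space. -/
theorem reachable_pairs_open_dense {n m : ℕ} (hm : 1 ≤ m) :
    IsOpen {p : Matrix (Fin n) (Fin n) ℝ × Matrix (Fin n) (Fin m) ℝ |
        (ctrlMat p.1 p.2).rank = n} ∧
    Dense {p : Matrix (Fin n) (Fin n) ℝ × Matrix (Fin n) (Fin m) ℝ |
        (ctrlMat p.1 p.2).rank = n} := by
  set s : Set (Matrix (Fin n) (Fin n) ℝ × Matrix (Fin n) (Fin m) ℝ) :=
    {p | (ctrlMat p.1 p.2).rank = n} with hs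
  have hset : s = {p : Matrix (Fin n) (Fin n) ℝ × Matrix (Fin n) (Fin m) ℝ |
      (ctrlMat p.1 p.2 * (ctrlMat p.1 p.2)ᵀ).det ≠ 0} := by
    ext p; exact mem_iff_det p.1 p.2
  have hcont : Continuous (fun p : Matrix (Fin n) (Fin n) ℝ × Matrix (Fin n) (Fin m) ℝ =>
      (ctrlMat p.1 p.2 * (ctrlMat p.1 p.2)ᵀ).det) := by
    have hctrl : Continuous (fun p : Matrix (Fin n) (Fin n) ℝ × Matrix (Fin n) (Fin m) ℝ =>
        ctrlMat p.1 p.2) := by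
      apply continuous_matrix
      intro i q
      exact ((continuous_fst.pow (q.1 : ℕ)).matrix_mul continuous_snd).matrix_elem i q.2
    exact (hctrl.matrix_mul hctrl.matrix_transpose).matrix_det
  constructor
  · rw [hset]
    exact (isOpen_compl_singleton.preimage hcont)
  · intro p
    obtain ⟨A₀, B₀, h₀⟩ := exists_good_pair n m hm
    set Ap : Matrix (Fin n) (Fin n) ℝ[X] :=
      p.1.map C + (X : ℝ[X]) • ((A₀ - p.1).map C) with hAp
    set Bp : Matrix (Fin n) (Fin m) ℝ[X] :=
      p.2.map C + (X : ℝ[X]) • ((B₀ - p.2).map C) with hBp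
    set g : ℝ[X] := (ctrlMatG Ap Bp * (ctrlMatG Ap Bp)ᵀ).det with hg
    set c : ℝ → Matrix (Fin n) (Fin n) ℝ × Matrix (Fin n) (Fin m) ℝ :=
      fun t => (p.1 + t • (A₀ - p.1), p.2 + t • (B₀ - p.2)) with hc
    have heval : ∀ t : ℝ, g.eval t =
        (ctrlMat (c t).1 (c t).2 * (ctrlMat (c t).1 (c t).2)ᵀ).det := by
      intro t
      have hA : Ap.map (eval t) = (c t).1 := by
        ext i j
        simp [hAp, hc, Matrix.map_apply, Matrix.add_apply, Matrix.smul_apply,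
          Matrix.sub_apply, smul_eq_mul]
      have hB : Bp.map (eval t) = (c t).2 := by
        ext i j
        simp [hBp, hc, Matrix.map_apply, Matrix.add_apply, Matrix.smul_apply,
          Matrix.sub_apply, smul_eq_mul]
      have := RingHom.map_det (evalRingHom t) (ctrlMatG Ap Bp * (ctrlMatG Ap Bp)ᵀ)
      rw [hg]
      rw [show (Polynomial.eval t) ((ctrlMatG Ap Bp * (ctrlMatG Ap Bp)ᵀ).det)
          = (evalRingHom t) ((ctrlMatG Ap Bp * (ctrlMatG Ap Bp)ᵀ).det) from rfl, this,
        RingHom.mapMatrix_apply, Matrix.map_mul, Matrix.transpose_map, ctrlMatG_map]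
      rw [show (Ap.map ⇑(evalRingHom t)) = (c t).1 from hA,
        show (Bp.map ⇑(evalRingHom t)) = (c t).2 from hB, ctrlMatG_real]
    have hg1 : g.eval 1 ≠ 0 := by
      rw [heval 1]
      have h1 : c 1 = (A₀, B₀) := by
        simp [hc, one_smul]
      rw [h1]
      exact (mem_iff_det A₀ B₀).1 h₀
    have hgne : g ≠ 0 := fun h => hg1 (by rw [h]; simp)
    have hfin : Set.Finite {x : ℝ | g.IsRoot x} := Polynomial.finite_setOf_isRoot hgne
    have hdense : Dense {x : ℝ | g.IsRoot x}ᶜ := hfin.countable.dense_compl ℝ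
    have hccont : Continuous c := by
      apply Continuous.prodMk
      · exact continuous_const.add (continuous_id.smul continuous_const)
      · exact continuous_const.add (continuous_id.smul continuous_const)
    have hc0 : c 0 = p := by
      simp [hc]
    have himg : c '' {x : ℝ | g.IsRoot x}ᶜ ⊆ s := by
      rintro _ ⟨t, ht, rfl⟩
      rw [hset]
      show (ctrlMat (c t).1 (c t).2 * (ctrlMat (c t).1 (c t).2)ᵀ).det ≠ 0
      rw [← heval t]
      exact ht
    have h1 : p ∈ c '' closure {x : ℝ | g.IsRoot x}ᶜ := ⟨0, hdense 0, hc0⟩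
    exact closure_mono himg (image_closure_subset_closure_image hccont h1)
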